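/- For E, E' ∈ ℤ^{n-1}, the right cosets x_E I and x_{E'} I coincide if and only if E ≡ E' modulo p componentwise (i.e. E_j - E'_j ∈ pℤ for all 2 ≤ j ≤ n). In particular the coset x_E I depends only on the image of E in 𝔽_p^{n-1}. -/
import Mathlib


open Pointwise
/-- The Iwahori subgroup of `GL_n(ℚ_p)`: matrices with entries in `ℤ_p`, determinant a
`p`-adic unit, and entries strictly below the diagonal in `pℤ_p`. -/
def Iwahori (p : ℕ) [Fact p.Prime] (n : ℕ) :
    Set (Matrix.GeneralLinearGroup (Fin n) ℚ_[p]) :=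
  {g | (∀ i j : Fin n, ‖(g : Matrix (Fin n) (Fin n) ℚ_[p]) i j‖ ≤ 1) ∧
    ‖(g : Matrix (Fin n) (Fin n) ℚ_[p]).det‖ = 1 ∧
    ∀ i j : Fin n, j < i → ‖(g : Matrix (Fin n) (Fin n) ℚ_[p]) i j‖ < 1}

/-- The diagonal matrix `diag(p^{a_1}, ..., p^{a_n})` as an element of `GL_n(ℚ_p)`. -/
noncomputable def dGL (p : ℕ) [Fact p.Prime] (n : ℕ) (a : Fin n → ℤ) :
    Matrix.GeneralLinearGroup (Fin n) ℚ_[p] :=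
  Matrix.GeneralLinearGroup.mkOfDetNeZero
    (Matrix.diagonal fun i => (p : ℚ_[p]) ^ (a i))
    (by
      rw [Matrix.det_diagonal]
      exact Finset.prod_ne_zero_iff.2 fun i _ =>
        zpow_ne_zero _ (Nat.cast_ne_zero.mpr (Fact.out : p.Prime).ne_zero))

/-- The matrix `x_E = [[1, p⁻¹E], [0, p⁻¹·Id]]` (here size `(n+1) × (n+1)`, with
`E ∈ ℤⁿ` filling the rest of the first row, scaled by `p⁻¹`). -/
noncomputable def xMat (p : ℕ) [Fact p.Prime] (n : ℕ) (E : Fin n → ℤ) :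
    Matrix (Fin (n + 1)) (Fin (n + 1)) ℚ_[p] :=
  Matrix.of fun i j =>
    if i = 0 then
      (if h : j = 0 then 1 else ((p : ℚ_[p]))⁻¹ * ((E (j.pred h) : ℤ) : ℚ_[p]))
    else if i = j then ((p : ℚ_[p]))⁻¹ else 0

/-- The matrix `x_E` as an element of `GL_{n+1}(ℚ_p)`. -/
noncomputable def xGL (p : ℕ) [Fact p.Prime] (n : ℕ) (E : Fin n → ℤ) :
    Matrix.GeneralLinearGroup (Fin (n + 1)) ℚ_[p] :=
  Matrix.GeneralLinearGroup.mkOfDetNeZero (xMat p n E)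
    (by
      have hp : (p : ℚ_[p]) ≠ 0 := Nat.cast_ne_zero.mpr (Fact.out : p.Prime).ne_zero
      have htri : (xMat p n E).BlockTriangular id := by
        intro i j hij
        have hi : i ≠ 0 := by
          rintro rfl
          exact absurd hij (by simp)
        have hij' : ¬ i = j := fun h => hij.ne h.symm
        simp only [xMat, Matrix.of_apply, if_neg hi, if_neg hij']
      rw [Matrix.det_of_upperTriangular htri]
      refine Finset.prod_ne_zero_iff.2 fun i _ => ?_
      by_cases hi : i = 0
      · subst hi; simp [xMat]
      · simp only [xMat, Matrix.of_apply, if_neg hi, if_pos rfl]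
        exact inv_ne_zero hp)

variable (p : ℕ) [Fact p.Prime] (n : ℕ)

/-- Unipotent matrix `[[1, c],[0, Id]]`. -/
noncomputable def Umat (c : Fin n → ℚ_[p]) : Matrix (Fin (n + 1)) (Fin (n + 1)) ℚ_[p] :=
  Matrix.of fun i j =>
    if i = 0 then (if h : j = 0 then 1 else c (j.pred h))
    else if i = j then 1 else 0

variable {p n}

lemma Umat_00 (c : Fin n → ℚ_[p]) : Umat p n c 0 0 = 1 := by simp [Umat]

lemma Umat_0succ (c : Fin n → ℚ_[p]) (k : Fin n) : Umat p n c 0 k.succ = c k := by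
  simp [Umat, Fin.succ_ne_zero]

lemma Umat_succ (c : Fin n → ℚ_[p]) (k : Fin n) (j : Fin (n+1)) :
    Umat p n c k.succ j = if k.succ = j then 1 else 0 := by
  simp [Umat, Fin.succ_ne_zero]

lemma Umat_zero : Umat p n 0 = (1 : Matrix (Fin (n+1)) (Fin (n+1)) ℚ_[p]) := by
  ext i j
  rcases Fin.eq_zero_or_eq_succ i with rfl | ⟨k, rfl⟩
  · rcases Fin.eq_zero_or_eq_succ j with rfl | ⟨m, rfl⟩
    · simp [Umat_00]
    · simp [Umat_0succ, Matrix.one_apply, (Fin.succ_ne_zero m).symm]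
  · rw [Umat_succ, Matrix.one_apply]

lemma Umat_mul (c c' : Fin n → ℚ_[p]) : Umat p n c * Umat p n c' = Umat p n (c + c') := by
  ext i j
  rw [Matrix.mul_apply, Fin.sum_univ_succ]
  rcases Fin.eq_zero_or_eq_succ i with rfl | ⟨k, rfl⟩
  · rw [Umat_00, one_mul]
    rcases Fin.eq_zero_or_eq_succ j with rfl | ⟨m, rfl⟩
    · rw [Umat_00, Umat_00]
      simp [Umat_0succ, Umat_succ, (Fin.succ_ne_zero _)]
    · rw [Umat_0succ]
      simp only [Umat_0succ, Umat_succ, Fin.succ_inj, mul_ite, mul_one, mul_zero,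
        Finset.sum_ite_eq', Finset.mem_univ, if_true, Pi.add_apply]
      ring
  · rw [Umat_succ, Umat_succ, if_neg (Fin.succ_ne_zero k), zero_mul, zero_add]
    rw [Finset.sum_eq_single k]
    · rw [Umat_succ, Umat_succ, if_pos rfl, one_mul]
    · intro x _ hx
      rw [Umat_succ, if_neg (fun h => hx (Fin.succ_inj.mp h).symm), zero_mul]
    · intro h; exact absurd (Finset.mem_univ _) h


noncomputable def uGL (p : ℕ) [Fact p.Prime] (n : ℕ) (c : Fin n → ℚ_[p]) :
    Matrix.GeneralLinearGroup (Fin (n+1)) ℚ_[p] :=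
  ⟨Umat p n c, Umat p n (-c),
    by rw [Umat_mul, add_neg_cancel, Umat_zero],
    by rw [Umat_mul, neg_add_cancel, Umat_zero]⟩

lemma uGL_inv (c : Fin n → ℚ_[p]) : (uGL p n c)⁻¹ = uGL p n (-c) := Units.ext rfl

lemma Umat_det (c : Fin n → ℚ_[p]) : (Umat p n c).det = 1 := by
  have htri : (Umat p n c).BlockTriangular id := by
    intro i j hij
    have hi : i ≠ 0 := by
      rintro rfl
      exact absurd hij (by simp)
    simp only [Umat, Matrix.of_apply, if_neg hi]
    exact if_neg hij.ne'
  rw [Matrix.det_of_upperTriangular htri]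
  refine Finset.prod_eq_one fun i _ => ?_
  by_cases hi : i = 0
  · subst hi; exact Umat_00 c
  · simp [Umat, hi]

lemma one_mem_Iwahori : (1 : Matrix.GeneralLinearGroup (Fin (n+1)) ℚ_[p]) ∈ Iwahori p (n+1) := by
  refine ⟨fun i j => ?_, by simp, fun i j hij => ?_⟩
  · rcases eq_or_ne i j with rfl | h
    · simp [Matrix.one_apply]
    · simp [Matrix.one_apply, h]
  · rw [Units.val_one, Matrix.one_apply_ne (fun h => hij.ne h.symm)]
    simp

lemma uGL_mul_mem {c : Fin n → ℚ_[p]} (hc : ∀ k, ‖c k‖ ≤ 1)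
    {h : Matrix.GeneralLinearGroup (Fin (n+1)) ℚ_[p]} (hh : h ∈ Iwahori p (n+1)) :
    uGL p n c * h ∈ Iwahori p (n+1) := by
  obtain ⟨h1, h2, h3⟩ := hh
  have hval : ((uGL p n c * h : Matrix.GeneralLinearGroup (Fin (n+1)) ℚ_[p]) :
      Matrix (Fin (n+1)) (Fin (n+1)) ℚ_[p]) = Umat p n c * (h : Matrix (Fin (n+1)) (Fin (n+1)) ℚ_[p]) :=
    rfl
  have hrow : ∀ (k : Fin n) (j : Fin (n+1)),
      (Umat p n c * (h : Matrix (Fin (n+1)) (Fin (n+1)) ℚ_[p])) k.succ j =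
        (h : Matrix (Fin (n+1)) (Fin (n+1)) ℚ_[p]) k.succ j := by
    intro k j
    rw [Matrix.mul_apply]
    rw [Finset.sum_eq_single k.succ]
    · rw [Umat_succ, if_pos rfl, one_mul]
    · intro x _ hx
      rcases Fin.eq_zero_or_eq_succ x with rfl | ⟨m, rfl⟩
      · simp [Umat, Fin.succ_ne_zero]
      · rw [Umat_succ, if_neg (fun hs => hx hs.symm), zero_mul]
    · intro hx; exact absurd (Finset.mem_univ _) hx
  refine ⟨fun i j => ?_, ?_, fun i j hij => ?_⟩
  · rw [hval]
    rcases Fin.eq_zero_or_eq_succ i with rfl | ⟨k, rfl⟩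
    · rw [Matrix.mul_apply]
      refine IsUltrametricDist.norm_sum_le_of_forall_le_of_nonneg zero_le_one fun k _ => ?_
      calc ‖Umat p n c 0 k * (h : Matrix (Fin (n+1)) (Fin (n+1)) ℚ_[p]) k j‖
          = ‖Umat p n c 0 k‖ * ‖(h : Matrix (Fin (n+1)) (Fin (n+1)) ℚ_[p]) k j‖ := norm_mul _ _
        _ ≤ 1 * 1 := by
            refine mul_le_mul ?_ (h1 k j) (norm_nonneg _) zero_le_one
            rcases Fin.eq_zero_or_eq_succ k with rfl | ⟨m, rfl⟩
            · rw [Umat_00]; simp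
            · rw [Umat_0succ]; exact hc m
        _ = 1 := one_mul 1
    · rw [hrow]; exact h1 _ j
  · rw [hval, Matrix.det_mul, Umat_det, one_mul]; exact h2
  · have hi : i ≠ 0 := by
      rintro rfl
      exact absurd hij (by simpa using Fin.zero_le j)
    obtain ⟨k, rfl⟩ := (Fin.eq_zero_or_eq_succ i).resolve_left hi
    rw [hval, hrow]
    exact h3 _ j hij

lemma uGL_coset {c : Fin n → ℚ_[p]} (hc : ∀ k, ‖c k‖ ≤ 1) :
    {uGL p n c} * Iwahori p (n+1) = Iwahori p (n+1) := by
  ext g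
  rw [Set.singleton_mul]
  constructor
  · rintro ⟨h, hh, rfl⟩
    exact uGL_mul_mem hc hh
  · intro hg
    refine ⟨(uGL p n c)⁻¹ * g, ?_, by group⟩
    rw [uGL_inv]
    exact uGL_mul_mem (fun k => by rw [Pi.neg_apply, norm_neg]; exact hc k) hg


section MainAux

variable {p : ℕ} [Fact p.Prime] {n : ℕ}

lemma xMat_00 (E : Fin n → ℤ) : xMat p n E 0 0 = 1 := by simp [xMat]

lemma xMat_0succ (E : Fin n → ℤ) (k : Fin n) :
    xMat p n E 0 k.succ = ((p : ℚ_[p]))⁻¹ * ((E k : ℤ) : ℚ_[p]) := by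
  simp [xMat, Fin.succ_ne_zero]

lemma xMat_succ (E : Fin n → ℤ) (k : Fin n) (j : Fin (n+1)) :
    xMat p n E k.succ j = if k.succ = j then ((p : ℚ_[p]))⁻¹ else 0 := by
  simp [xMat, Fin.succ_ne_zero]

lemma xGL_val (E : Fin n → ℤ) :
    ((xGL p n E : Matrix.GeneralLinearGroup (Fin (n+1)) ℚ_[p]) :
      Matrix (Fin (n+1)) (Fin (n+1)) ℚ_[p]) = xMat p n E := rfl

end MainAux



/-- For `E, E' ∈ ℤⁿ`, the right cosets `x_E I` and `x_{E'} I` of the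
Iwahori subgroup `I ⊆ GL_{n+1}(ℚ_p)` coincide if and only if `E ≡ E'` modulo `p`
componentwise.  In particular the coset `x_E I` depends only on the image of `E` in
`𝔽_pⁿ`. -/
theorem xE_coset_eq_iff (p : ℕ) [Fact p.Prime] (n : ℕ) (hn : 1 ≤ n)
    (E E' : Fin n → ℤ) :
    {xGL p n E} * Iwahori p (n + 1) = {xGL p n E'} * Iwahori p (n + 1) ↔
      ∀ j : Fin n, (p : ℤ) ∣ E j - E' j := by
  have hp0 : ((p : ℚ_[p])) ≠ 0 := Nat.cast_ne_zero.mpr (Fact.out : p.Prime).ne_zero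
  set c₀ : Fin n → ℚ_[p] := fun k => ((p : ℚ_[p]))⁻¹ * ((E k - E' k : ℤ) : ℚ_[p]) with hc₀
  have hm : ∀ k, (p : ℚ_[p]) * c₀ k = ((E k - E' k : ℤ) : ℚ_[p]) := by
    intro k
    rw [hc₀, ← mul_assoc, mul_inv_cancel₀ hp0, one_mul]
  have hiff : ∀ k, ‖c₀ k‖ ≤ 1 ↔ (p : ℤ) ∣ E k - E' k := by
    intro k
    have hppos : (0 : ℝ) < (p : ℝ) := by
      exact_mod_cast (Fact.out : p.Prime).pos
    have hdvd1 : ‖((E k - E' k : ℤ) : ℚ_[p])‖ ≤ (p : ℝ)⁻¹ ↔ (p : ℤ) ∣ E k - E' k := by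
      rw [show ((p : ℝ))⁻¹ = (p : ℝ) ^ (-(1:ℕ) : ℤ) by norm_num,
        Padic.norm_int_le_pow_iff_dvd, pow_one]
    have hnormc : ‖c₀ k‖ = (p : ℝ) * ‖((E k - E' k : ℤ) : ℚ_[p])‖ := by
      simp only [hc₀]
      rw [norm_mul, norm_inv, Padic.norm_p, inv_inv]
    rw [hnormc, ← hdvd1]
    constructor
    · intro h
      have := mul_le_mul_of_nonneg_left h (le_of_lt (inv_pos.mpr hppos))
      rwa [← mul_assoc, inv_mul_cancel₀ hppos.ne', one_mul, mul_one] at this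
    · intro h
      have := mul_le_mul_of_nonneg_left h hppos.le
      rwa [mul_inv_cancel₀ hppos.ne'] at this
  have hfac : xGL p n E = xGL p n E' * uGL p n c₀ := by
    apply Units.ext
    show xMat p n E = xMat p n E' * Umat p n c₀
    ext i j
    rw [Matrix.mul_apply, Fin.sum_univ_succ]
    rcases Fin.eq_zero_or_eq_succ i with rfl | ⟨k, rfl⟩
    · rcases Fin.eq_zero_or_eq_succ j with rfl | ⟨m, rfl⟩
      · rw [xMat_00, xMat_00, Umat_00, mul_one]
        have : ∀ x : Fin n, xMat p n E' 0 x.succ * Umat p n c₀ x.succ 0 = 0 := by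
          intro x
          rw [Umat_succ, if_neg (Fin.succ_ne_zero x), mul_zero]
        rw [Finset.sum_congr rfl (fun x _ => this x), Finset.sum_const_zero, add_zero]
      · rw [xMat_0succ, xMat_00, one_mul, Umat_0succ]
        have : ∀ x : Fin n, xMat p n E' 0 x.succ * Umat p n c₀ x.succ m.succ =
            if x = m then ((p : ℚ_[p]))⁻¹ * ((E' x : ℤ) : ℚ_[p]) else 0 := by
          intro x
          rw [xMat_0succ, Umat_succ]
          by_cases h : x = m <;> simp [h, Fin.succ_inj]
        rw [Finset.sum_congr rfl (fun x _ => this x), Finset.sum_ite_eq' Finset.univ m,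
          if_pos (Finset.mem_univ m), hc₀]
        push_cast
        ring
    · rw [xMat_succ, xMat_succ, if_neg (Fin.succ_ne_zero k), zero_mul, zero_add]
      rw [Finset.sum_eq_single k]
      · rw [xMat_succ, if_pos rfl, Umat_succ, mul_ite, mul_one, mul_zero]
      · intro x _ hx
        rw [xMat_succ, if_neg (fun h => hx (Fin.succ_inj.mp h).symm), zero_mul]
      · intro h; exact absurd (Finset.mem_univ _) h
  constructor
  · intro hset
    have hx : xGL p n E ∈ {xGL p n E'} * Iwahori p (n + 1) := by
      rw [← hset, Set.singleton_mul]
      exact ⟨1, one_mem_Iwahori, mul_one _⟩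
    rw [Set.singleton_mul] at hx
    obtain ⟨h, hh, hEq⟩ := hx
    have huh : uGL p n c₀ = h := mul_left_cancel (hfac.symm.trans hEq.symm)
    intro k
    rw [← hiff k]
    have := hh.1 0 k.succ
    rw [← huh] at this
    have hval : ((uGL p n c₀ : Matrix.GeneralLinearGroup (Fin (n+1)) ℚ_[p]) :
        Matrix (Fin (n+1)) (Fin (n+1)) ℚ_[p]) 0 k.succ = c₀ k := Umat_0succ c₀ k
    rwa [hval] at this
  · intro hdvd
    rw [hfac, ← Set.singleton_mul_singleton, mul_assoc,
      uGL_coset (fun k => (hiff k).mpr (hdvd k))]
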